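/- For every even integer t ≥ 4 there exists a constant C_t (depending only on t, with C_t < 1 for t ≥ 6) such that the following holds: if X_1, ..., X_n are t-wise independent random variables each taking values in the interval [0, 1], X = X_1 + ⋯ + X_n, and a > 0 is a real number, then Pr[ |X − E[X]| ≥ a ] ≤ C_t · (n·t / a²)^{t/2}. -/

import Mathlib

open MeasureTheory ProbabilityTheory Finset

lemma BR_star {x : ℝ} (hx : 0 ≤ x) : Real.exp x - x ≤ Real.exp (2/3 * x^2) := by
  have hq : 1 + (2/3*x^2) + (2/3*x^2)^2/2 ≤ Real.exp (2/3*x^2) :=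
    Real.quadratic_le_exp_of_nonneg (by positivity)
  rcases le_or_gt x 1 with hx1 | hx1
  · have h4 := Real.exp_bound' hx hx1 (n := 4) (by norm_num)
    have hx3 : x^3 ≤ x^2 := pow_le_pow_of_le_one hx hx1 (by norm_num)
    have hx4 : x^4 ≤ x^2 := pow_le_pow_of_le_one hx hx1 (by norm_num)
    simp only [Finset.sum_range_succ, Nat.factorial] at h4
    norm_num at h4
    nlinarith [sq_nonneg x, pow_nonneg hx 4]
  rcases le_or_gt x (3/2) with hx2 | hx2
  · set y := x - 1 with hy
    have hy0 : 0 ≤ y := by simp [hy]; linarith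
    have hy1 : y ≤ 1 := by simp [hy]; linarith
    have h4 := Real.exp_bound' hy0 hy1 (n := 4) (by norm_num)
    simp only [Finset.sum_range_succ, Nat.factorial] at h4
    norm_num at h4
    have hex : Real.exp x = Real.exp 1 * Real.exp y := by
      rw [← Real.exp_add, hy]; ring_nf
    have he : Real.exp 1 < 2.7182818286 := Real.exp_one_lt_d9
    have he0 : (0:ℝ) < Real.exp 1 := Real.exp_pos 1
    have hxy : x = 1 + y := by simp [hy]
    have hcP : Real.exp 1 * Real.exp y ≤
        2.7182818286 * (1 + y + y^2/2 + y^3/6 + y^4*5/96) := by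
      apply mul_le_mul he.le _ (Real.exp_pos y).le (by norm_num)
      linarith [h4]
    rw [hex, hxy]
    rw [hxy] at hq
    nlinarith [hcP, hy0, pow_nonneg hy0 2, pow_nonneg hy0 3, pow_nonneg hy0 4, hq]
  · have h1 : x ≤ 2/3 * x^2 := by nlinarith
    have h2 := Real.exp_le_exp.2 h1
    linarith

lemma BR_fact : ∀ t : ℕ, 6 ≤ t → (t.factorial : ℝ) * Real.exp (2*t/3) < (t:ℝ)^t := by
  intro t ht
  induction t, ht using Nat.le_induction with
  | base =>
    have he : Real.exp 1 < 2.7182818286 := Real.exp_one_lt_d9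
    have he0 : (0:ℝ) < Real.exp 1 := Real.exp_pos 1
    have h2 : Real.exp 1 ^ 2 < 7.389057 := by nlinarith
    have h4 : Real.exp 1 ^ 4 < 55 := by nlinarith [h2, pow_pos he0 2]
    have e1 : (2 * ((6:ℕ):ℝ) / 3) = ((4:ℕ):ℝ) * 1 := by norm_num
    rw [e1, Real.exp_nat_mul]
    have e2 : ((Nat.factorial 6 : ℕ):ℝ) = 720 := by norm_num [Nat.factorial]
    have e3 : (((6:ℕ)):ℝ)^(6:ℕ) = 46656 := by norm_num
    rw [e2, e3]
    nlinarith [h4, he0]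
  | succ t ht ih =>
    have ht0 : (0:ℝ) < t := by positivity
    have h2 : Real.exp (2/3) ≤ 2 := by
      have h3 : Real.exp (2/3) ^ 3 = Real.exp 2 := by
        rw [← Real.exp_nat_mul]; norm_num
      have he : Real.exp 1 < 2.7182818286 := Real.exp_one_lt_d9
      have he2 : Real.exp 2 = (Real.exp 1)^2 := by rw [← Real.exp_nat_mul]; norm_num
      have h8 : Real.exp (2/3)^3 ≤ 2^3 := by
        rw [h3, he2]; nlinarith [Real.exp_pos 1]
      exact le_of_pow_le_pow_left₀ (by norm_num) (by norm_num) h8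
    have hb : (2:ℝ) ≤ (1 + 1/(t:ℝ))^t := by
      have hm2 : (-2:ℝ) ≤ 1/(t:ℝ) := le_trans (by norm_num : (-2:ℝ) ≤ 0) (by positivity)
      have h := one_add_mul_le_pow hm2 t
      rw [mul_one_div, div_self ht0.ne'] at h
      linarith
    have key2 : (2:ℝ) * (t:ℝ)^t ≤ ((t:ℝ)+1)^t := by
      have h := mul_le_mul_of_nonneg_right hb (by positivity : (0:ℝ) ≤ (t:ℝ)^t)
      calc (2:ℝ) * (t:ℝ)^t ≤ (1+1/(t:ℝ))^t * (t:ℝ)^t := h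
        _ = ((1+1/(t:ℝ)) * t)^t := by rw [mul_pow]
        _ = ((t:ℝ)+1)^t := by congr 1; field_simp
    have hexp : Real.exp (2*((t:ℝ)+1)/3) = Real.exp (2*t/3) * Real.exp (2/3) := by
      rw [← Real.exp_add]; ring_nf
    have hfac : (((t+1).factorial : ℕ) : ℝ) = ((t:ℝ)+1) * (t.factorial:ℝ) := by
      rw [Nat.factorial_succ]; push_cast; ring
    have hc : ((t+1:ℕ):ℝ) = (t:ℝ)+1 := by push_cast; ring
    rw [hc, hfac, hexp]
    calc ((t:ℝ)+1) * (t.factorial:ℝ) * (Real.exp (2*t/3) * Real.exp (2/3))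
        = ((t:ℝ)+1) * (((t.factorial:ℝ) * Real.exp (2*t/3)) * Real.exp (2/3)) := by ring
      _ < ((t:ℝ)+1) * ((t:ℝ)^t * Real.exp (2/3)) := by
          apply mul_lt_mul_of_pos_left _ (by positivity)
          exact mul_lt_mul_of_pos_right ih (Real.exp_pos _)
      _ ≤ ((t:ℝ)+1) * (2 * (t:ℝ)^t) := by
          apply mul_le_mul_of_nonneg_left _ (by positivity)
          nlinarith [h2, pow_pos ht0 t]
      _ ≤ ((t:ℝ)+1) * ((t:ℝ)+1)^t := by
          exact mul_le_mul_of_nonneg_left key2 (by positivity)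
      _ = ((t:ℝ)+1)^(t+1) := by rw [pow_succ]; ring

lemma BR_integrable {Ω : Type} [MeasurableSpace Ω] {μ : Measure Ω} [IsProbabilityMeasure μ]
    {f : Ω → ℝ} (hm : Measurable f) {C : ℝ} (h : ∀ ω, |f ω| ≤ C) : Integrable f μ :=
  ⟨hm.aestronglyMeasurable,
    HasFiniteIntegral.of_bounded (C := C) (ae_of_all _ fun ω => by
      simpa [Real.norm_eq_abs] using h ω)⟩

lemma BR_indep_integral {Ω : Type} [MeasurableSpace Ω] {μ : Measure Ω} [IsProbabilityMeasure μ]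
    {ι : Type} [Fintype ι] [DecidableEq ι] (g : ι → Ω → ℝ) (hm : ∀ i, Measurable (g i))
    (hb : ∀ i ω, |g i ω| ≤ 1)
    (hind : iIndepFun g μ) :
    ∀ s : Finset ι, ∫ ω, ∏ i ∈ s, g i ω ∂μ = ∏ i ∈ s, ∫ ω, g i ω ∂μ := by
  intro s
  induction s using Finset.induction_on with
  | empty => simp
  | insert a s hnotmem ih =>
    have hprodmeas : Measurable (fun ω => ∏ i ∈ s, g i ω) := by
      exact Finset.measurable_prod s fun i _ => hm i
    have hprodbd : ∀ ω, |∏ i ∈ s, g i ω| ≤ 1 := by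
      intro ω
      rw [Finset.abs_prod]
      calc ∏ i ∈ s, |g i ω| ≤ ∏ i ∈ s, 1 :=
            Finset.prod_le_prod (fun i _ => abs_nonneg _) (fun i _ => hb i ω)
        _ = 1 := Finset.prod_const_one
    have hIndep : IndepFun (∏ i ∈ s, g i) (g a) μ :=
      hind.indepFun_finsetProd_of_notMem hm hnotmem
    have h1 : Integrable (g a) μ := BR_integrable (hm a) (hb a)
    have h2 : Integrable (fun ω => ∏ i ∈ s, g i ω) μ := BR_integrable hprodmeas hprodbd
    simp only [Finset.prod_insert hnotmem]
    have heq : ∀ ω, g a ω * ∏ i ∈ s, g i ω = (∏ i ∈ s, g i ω) * g a ω := fun ω => mul_comm _ _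
    calc ∫ ω, g a ω * ∏ i ∈ s, g i ω ∂μ
        = ∫ ω, (∏ i ∈ s, g i ω) * g a ω ∂μ := by simp_rw [heq]
      _ = (∫ ω, ∏ i ∈ s, g i ω ∂μ) * ∫ ω, g a ω ∂μ := by
          have h2' : Integrable (∏ i ∈ s, g i) μ := by
            have : (∏ i ∈ s, g i) = fun ω => ∏ i ∈ s, g i ω := by
              funext ω; simp [Finset.prod_apply]
            rw [this]; exact h2
          have key := hIndep.integral_mul_eq_mul_integral h2'.aestronglyMeasurable h1.aestronglyMeasurable
          have hfe : ((∏ i ∈ s, g i) * g a) = fun ω => (∏ i ∈ s, g i ω) * g a ω := by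
            funext ω; simp [Finset.prod_apply]
          have hfe2 : (∏ i ∈ s, g i) = fun ω => ∏ i ∈ s, g i ω := by
            funext ω; simp [Finset.prod_apply]
          rw [hfe, hfe2] at key
          exact key
      _ = (∫ ω, g a ω ∂μ) * ∏ i ∈ s, ∫ ω, g i ω ∂μ := by rw [ih]; ring

lemma BR_moment {Ω : Type} [MeasurableSpace Ω] {μ : Measure Ω} [IsProbabilityMeasure μ]
    {n t : ℕ} (hn : 0 < n) (ht : 4 ≤ t)
    (Y : Fin n → Ω → ℝ) (hYm : ∀ i, Measurable (Y i)) (hYb : ∀ i ω, |Y i ω| ≤ 1)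
    (hEY : ∀ i, ∫ ω, Y i ω ∂μ = 0)
    (hfactor : ∀ k : Fin n → ℕ, (∑ i, k i) = t →
      ∫ ω, ∏ i, Y i ω ^ k i ∂μ = ∏ i, ∫ ω, Y i ω ^ k i ∂μ)
    (th : ℕ) (htth : t = th + th) :
    ∫ ω, (∑ i, Y i ω)^t ∂μ ≤
      (t.factorial:ℝ) * Real.exp (2*(t:ℝ)/3) * ((n:ℝ)/(t:ℝ))^th := by
  classical
  have hnpos : (0:ℝ) < n := by exact_mod_cast hn
  have htpos : (0:ℝ) < t := by
    have : (4:ℝ) ≤ t := by exact_mod_cast ht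
    linarith
  -- basic bounds on moments
  have hYpowb : ∀ i (b : ℕ) ω, |Y i ω ^ b| ≤ 1 := fun i b ω => by
    rw [abs_pow]; exact pow_le_one₀ (abs_nonneg _) (hYb i ω)
  have hYpint : ∀ i (b : ℕ), Integrable (fun ω => Y i ω ^ b) μ := fun i b =>
    BR_integrable ((hYm i).pow_const b) (hYpowb i b)
  have hMabs : ∀ i (b : ℕ), |∫ ω, Y i ω ^ b ∂μ| ≤ 1 := by
    intro i b
    calc |∫ ω, Y i ω ^ b ∂μ| = ‖∫ ω, Y i ω ^ b ∂μ‖ := (Real.norm_eq_abs _).symm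
      _ ≤ ∫ ω, ‖Y i ω ^ b‖ ∂μ := norm_integral_le_integral_norm _
      _ = ∫ ω, |Y i ω ^ b| ∂μ := by simp [Real.norm_eq_abs]
      _ ≤ ∫ ω, (1:ℝ) ∂μ :=
          integral_mono (hYpint i b).abs (integrable_const 1) (fun ω => hYpowb i b ω)
      _ = 1 := by simp
  set W : ℕ → ℝ := fun b => if b = 1 then 0 else 1 with hW
  have hW0 : ∀ b, 0 ≤ W b := fun b => by by_cases h : b = 1 <;> simp [hW, h]
  have hMW : ∀ i b, |∫ ω, Y i ω ^ b ∂μ| ≤ W b := by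
    intro i b
    by_cases h : b = 1
    · subst h
      simp only [hW, if_pos rfl, pow_one]
      rw [hEY i]; simp
    · simpa [hW, h] using hMabs i b
  -- products are integrable
  have hprodint : ∀ k : Fin n → ℕ, Integrable (fun ω => ∏ i, Y i ω ^ k i) μ := fun k =>
    BR_integrable (Finset.measurable_prod _ fun i _ => (hYm i).pow_const _)
      (C := 1) (fun ω => by
        rw [Finset.abs_prod]
        calc ∏ i, |Y i ω ^ k i| ≤ ∏ i : Fin n, 1 :=
              Finset.prod_le_prod (fun _ _ => abs_nonneg _) (fun i _ => hYpowb i _ ω)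
          _ = 1 := by simp)
  -- expansion of the t-th moment
  have hkey1 : ∫ ω, (∑ i, Y i ω)^t ∂μ = ∑ k ∈ Finset.piAntidiag Finset.univ t,
      (Nat.multinomial Finset.univ k : ℝ) * ∏ i, ∫ ω, Y i ω ^ k i ∂μ := by
    calc ∫ ω, (∑ i, Y i ω)^t ∂μ
        = ∫ ω, (∑ k ∈ Finset.piAntidiag Finset.univ t,
            (Nat.multinomial Finset.univ k : ℝ) * ∏ i, Y i ω ^ k i) ∂μ := by
          congr 1; funext ω
          exact Finset.sum_pow_eq_sum_piAntidiag Finset.univ (fun i => Y i ω) t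
      _ = ∑ k ∈ Finset.piAntidiag Finset.univ t,
            ∫ ω, (Nat.multinomial Finset.univ k : ℝ) * ∏ i, Y i ω ^ k i ∂μ :=
          integral_finset_sum _ (fun k _ => ((hprodint k).const_mul _))
      _ = ∑ k ∈ Finset.piAntidiag Finset.univ t,
            (Nat.multinomial Finset.univ k : ℝ) * ∫ ω, ∏ i, Y i ω ^ k i ∂μ :=
          Finset.sum_congr rfl fun k _ => integral_const_mul _ _
      _ = ∑ k ∈ Finset.piAntidiag Finset.univ t,
            (Nat.multinomial Finset.univ k : ℝ) * ∏ i, ∫ ω, Y i ω ^ k i ∂μ := by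
          refine Finset.sum_congr rfl fun k hk => ?_
          rw [hfactor k (Finset.mem_piAntidiag.1 hk).1]
  -- bound by combinatorial sum
  set T : ℝ := ∑ k ∈ Finset.piAntidiag (Finset.univ : Finset (Fin n)) t,
      (Nat.multinomial Finset.univ k : ℝ) * ∏ i, W (k i) with hT
  have hkey2 : ∫ ω, (∑ i, Y i ω)^t ∂μ ≤ T := by
    rw [hkey1, hT]
    apply Finset.sum_le_sum
    intro k _
    apply mul_le_mul_of_nonneg_left _ (by positivity)
    calc ∏ i, ∫ ω, Y i ω ^ k i ∂μ ≤ |∏ i, ∫ ω, Y i ω ^ k i ∂μ| := le_abs_self _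
      _ = ∏ i, |∫ ω, Y i ω ^ k i ∂μ| := Finset.abs_prod _ _
      _ ≤ ∏ i, W (k i) :=
          Finset.prod_le_prod (fun i _ => abs_nonneg _) (fun i _ => hMW i (k i))
  -- the generating function bound
  set lam : ℝ := Real.sqrt ((t:ℝ)/(n:ℝ)) with hlam
  have hlampos : 0 < lam := Real.sqrt_pos.2 (by positivity)
  have hlamsq : lam^2 = (t:ℝ)/(n:ℝ) := Real.sq_sqrt (by positivity)
  set E : ℝ := ∑ b ∈ Finset.range (t+1), W b * lam^b / (Nat.factorial b : ℝ) with hE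
  have hEnonneg : 0 ≤ E :=
    Finset.sum_nonneg fun b _ =>
      div_nonneg (mul_nonneg (hW0 b) (by positivity)) (by positivity)
  have hEexp : E ≤ Real.exp lam - lam := by
    have hsplit : ∀ b : ℕ, W b * lam^b / (Nat.factorial b:ℝ)
        = lam^b/(Nat.factorial b:ℝ) - (if b = 1 then lam else 0) := by
      intro b
      by_cases hb : b = 1
      · subst hb; simp [hW]
      · simp [hW, hb]
    rw [hE]
    calc ∑ b ∈ Finset.range (t+1), W b * lam^b / (Nat.factorial b:ℝ)
        = (∑ b ∈ Finset.range (t+1), lam^b/(Nat.factorial b:ℝ))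
          - ∑ b ∈ Finset.range (t+1), (if b = 1 then lam else 0) := by
          simp_rw [hsplit]
          rw [Finset.sum_sub_distrib]
      _ = (∑ b ∈ Finset.range (t+1), lam^b/(Nat.factorial b:ℝ)) - lam := by
          congr 1
          rw [Finset.sum_ite_eq' (Finset.range (t+1)) 1 (fun _ => lam)]
          rw [if_pos (Finset.mem_range.2 (by omega))]
      _ ≤ Real.exp lam - lam := by
          have h := Real.sum_le_exp_of_nonneg hlampos.le (t+1)
          linarith
  have hEstar : E ≤ Real.exp (2/3 * lam^2) := le_trans hEexp (BR_star hlampos.le)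
  -- key3 : T * lam^t ≤ t! * E^n
  have hEn : E^n = ∑ p ∈ Fintype.piFinset (fun _ : Fin n => Finset.range (t+1)),
      ∏ i : Fin n, (W (p i) * lam^(p i) / ((p i).factorial : ℝ)) := by
    have hps := Finset.prod_univ_sum (fun _ : Fin n => Finset.range (t+1))
      (fun _ b => W b * lam^b / (Nat.factorial b : ℝ))
    rw [← hps, Finset.prod_const, Finset.card_univ, Fintype.card_fin]
  have hterm : ∀ k ∈ Finset.piAntidiag (Finset.univ : Finset (Fin n)) t,
      ((Nat.multinomial Finset.univ k : ℝ) * ∏ i, W (k i)) * lam^t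
      = (t.factorial:ℝ) * ∏ i : Fin n, (W (k i) * lam^(k i) / ((k i).factorial : ℝ)) := by
    intro k hk
    obtain ⟨hksum, -⟩ := Finset.mem_piAntidiag.1 hk
    have hspec : (∏ i, ((k i).factorial)) * Nat.multinomial Finset.univ k = t.factorial := by
      have h := Nat.multinomial_spec Finset.univ k
      rw [hksum] at h; exact h
    have hcast : ((t.factorial : ℕ):ℝ)
        = (∏ i, ((k i).factorial:ℝ)) * (Nat.multinomial Finset.univ k : ℝ) := by
      rw [← Nat.cast_prod, ← Nat.cast_mul, hspec]
    have hlamt : lam^t = ∏ i, lam^(k i) := by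
      rw [Finset.prod_pow_eq_pow_sum, hksum]
    have hfacpos : (0:ℝ) < ∏ i, ((k i).factorial : ℝ) :=
      Finset.prod_pos fun i _ => by exact_mod_cast (k i).factorial_pos
    calc ((Nat.multinomial Finset.univ k : ℝ) * ∏ i, W (k i)) * lam^t
        = ((Nat.multinomial Finset.univ k : ℝ) * ∏ i, W (k i)) * ∏ i, lam^(k i) := by
          rw [hlamt]
      _ = (t.factorial:ℝ) * ∏ i : Fin n, (W (k i) * lam^(k i) / ((k i).factorial : ℝ)) := by
          rw [hcast]
          rw [Finset.prod_div_distrib, Finset.prod_mul_distrib]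
          field_simp
  have hkey3 : T * lam^t ≤ (t.factorial:ℝ) * E^n := by
    calc T * lam^t
        = ∑ k ∈ Finset.piAntidiag (Finset.univ : Finset (Fin n)) t,
            ((Nat.multinomial Finset.univ k : ℝ) * ∏ i, W (k i)) * lam^t := by
          rw [hT, Finset.sum_mul]
      _ = ∑ k ∈ Finset.piAntidiag (Finset.univ : Finset (Fin n)) t,
            (t.factorial:ℝ) * ∏ i : Fin n, (W (k i) * lam^(k i) / ((k i).factorial : ℝ)) :=
          Finset.sum_congr rfl hterm
      _ ≤ ∑ p ∈ Fintype.piFinset (fun _ : Fin n => Finset.range (t+1)),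
            (t.factorial:ℝ) * ∏ i : Fin n, (W (p i) * lam^(p i) / ((p i).factorial : ℝ)) := by
          apply Finset.sum_le_sum_of_subset_of_nonneg
          · intro k hk
            obtain ⟨hksum, -⟩ := Finset.mem_piAntidiag.1 hk
            rw [Fintype.mem_piFinset]
            intro i
            rw [Finset.mem_range]
            have hle : k i ≤ t := by
              rw [← hksum]
              exact Finset.single_le_sum (fun j _ => Nat.zero_le _) (Finset.mem_univ i)
            omega
          · intro p _ _
            apply mul_nonneg (by positivity)
            apply Finset.prod_nonneg
            intro i _
            exact div_nonneg (mul_nonneg (hW0 _) (by positivity)) (by positivity)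
      _ = (t.factorial:ℝ) * E^n := by
          rw [← Finset.mul_sum, hEn]
  -- putting everything together
  have hEn_le : E^n ≤ Real.exp (2*(t:ℝ)/3) := by
    calc E^n ≤ (Real.exp (2/3 * lam^2))^n := pow_le_pow_left₀ hEnonneg hEstar n
      _ = Real.exp ((n:ℕ) * (2/3 * lam^2)) := (Real.exp_nat_mul _ n).symm
      _ = Real.exp (2*(t:ℝ)/3) := by
          rw [hlamsq]
          congr 1
          field_simp
  have hlamt2 : lam^t = ((t:ℝ)/(n:ℝ))^th := by
    have h2 : t = 2 * th := by omega
    calc lam^t = lam^(2*th) := by rw [← h2]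
      _ = (lam^2)^th := by rw [pow_mul]
      _ = ((t:ℝ)/(n:ℝ))^th := by rw [hlamsq]
  have hlamtpos : 0 < lam^t := pow_pos hlampos t
  calc ∫ ω, (∑ i, Y i ω)^t ∂μ ≤ T := hkey2
    _ ≤ (t.factorial:ℝ) * E^n / lam^t := by
        rw [le_div_iff₀ hlamtpos]; exact hkey3
    _ ≤ (t.factorial:ℝ) * Real.exp (2*(t:ℝ)/3) / lam^t := by
        gcongr
    _ = (t.factorial:ℝ) * Real.exp (2*(t:ℝ)/3) * ((n:ℝ)/(t:ℝ))^th := by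
        rw [hlamt2, div_eq_mul_inv, ← inv_pow, inv_div]

lemma BR_factor {Ω : Type} [MeasurableSpace Ω] {μ : Measure Ω} [IsProbabilityMeasure μ]
    {n t : ℕ} (X : Fin n → Ω → ℝ) (hXm : ∀ i, Measurable (X i)) (m : Fin n → ℝ)
    (hYb : ∀ i ω, |X i ω - m i| ≤ 1)
    (hind : ∀ s : Finset (Fin n), s.card ≤ t →
      iIndepFun (fun i : s => X (i : Fin n)) μ)
    (k : Fin n → ℕ) (hk : (∑ i, k i) = t) :
    ∫ ω, ∏ i, (X i ω - m i) ^ k i ∂μ = ∏ i, ∫ ω, (X i ω - m i) ^ k i ∂μ := by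
  classical
  set s : Finset (Fin n) := Finset.univ.filter (fun i => k i ≠ 0) with hsdef
  have hks : ∀ i, i ∉ s → k i = 0 := by
    intro i hi
    by_contra hne
    exact hi (Finset.mem_filter.2 ⟨Finset.mem_univ i, hne⟩)
  have hcard : s.card ≤ t := by
    have h1 : s.card = ∑ i ∈ s, 1 := by simp
    have h2 : ∑ i ∈ s, 1 ≤ ∑ i ∈ s, k i := Finset.sum_le_sum (fun i hi => by
      have := (Finset.mem_filter.1 hi).2; omega)
    have h3 : ∑ i ∈ s, k i ≤ ∑ i, k i :=
      Finset.sum_le_sum_of_subset (Finset.filter_subset _ _)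
    omega
  have hindY : iIndepFun
      (fun (j : s) => fun ω => (X (j : Fin n) ω - m (j : Fin n)) ^ k (j : Fin n)) μ := by
    have h := (hind s hcard).comp
      (fun (j : s) => fun x : ℝ => (x - m (j : Fin n)) ^ k (j : Fin n))
      (fun j => (measurable_id.sub measurable_const).pow_const _)
    exact h
  have hres := BR_indep_integral (μ := μ) (ι := s)
    (fun (j : s) => fun ω => (X (j : Fin n) ω - m (j : Fin n)) ^ k (j : Fin n))
    (fun j => ((hXm _).sub measurable_const).pow_const _)
    (fun j ω => by rw [abs_pow]; exact pow_le_one₀ (abs_nonneg _) (hYb _ ω))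
    hindY Finset.univ
  have hprod1 : ∀ ω, ∏ i, (X i ω - m i) ^ k i = ∏ j ∈ s, (X j ω - m j) ^ k j := by
    intro ω
    symm
    apply Finset.prod_subset (Finset.subset_univ s)
    intro i _ hnot
    rw [hks i hnot, pow_zero]
  have hprod2 : ∏ i, ∫ ω, (X i ω - m i) ^ k i ∂μ = ∏ j ∈ s, ∫ ω, (X j ω - m j) ^ k j ∂μ := by
    symm
    apply Finset.prod_subset (Finset.subset_univ s)
    intro i _ hnot
    rw [hks i hnot]
    simp
  calc ∫ ω, ∏ i, (X i ω - m i) ^ k i ∂μ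
      = ∫ ω, ∏ j : s, (X (j:Fin n) ω - m (j:Fin n)) ^ k (j:Fin n) ∂μ := by
        congr 1; funext ω
        rw [hprod1 ω]
        exact (Finset.prod_coe_sort s (fun j => (X j ω - m j) ^ k j)).symm
    _ = ∏ j : s, ∫ ω, (X (j:Fin n) ω - m (j:Fin n)) ^ k (j:Fin n) ∂μ := by
        simpa using hres
    _ = ∏ i, ∫ ω, (X i ω - m i) ^ k i ∂μ := by
        rw [hprod2]
        exact Finset.prod_coe_sort s (fun j => ∫ ω, (X j ω - m j) ^ k j ∂μ)

/-- **Limited-independence Chernoff–Hoeffding bound (Bellare–Rompel).**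
For every even integer `t ≥ 4` there is a constant `C_t` (with `C_t < 1` for `t ≥ 6`)
such that: if `X_1, …, X_n` are `t`-wise independent random variables with values in
`[0, 1]`, `X = X_1 + ⋯ + X_n` and `a > 0`, then
`Pr[|X − E[X]| ≥ a] ≤ C_t · (n·t/a²)^(t/2)`. -/
theorem stmt_12 (t : ℕ) (ht4 : 4 ≤ t) (hte : Even t) :
    ∃ Ct : ℝ, (6 ≤ t → Ct < 1) ∧
      ∀ (n : ℕ) (Ω : Type) (mΩ : MeasurableSpace Ω) (μ : Measure Ω),
        IsProbabilityMeasure μ →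
        ∀ X : Fin n → Ω → ℝ,
          (∀ i, Measurable (X i)) →
          (∀ i ω, X i ω ∈ Set.Icc (0 : ℝ) 1) →
          (∀ s : Finset (Fin n), s.card ≤ t →
            iIndepFun (fun i : s => X (i : Fin n)) μ) →
          ∀ a : ℝ, 0 < a →
            μ {ω | a ≤ |(∑ i, X i ω) - ∫ ω', (∑ i, X i ω') ∂μ|} ≤
              ENNReal.ofReal (Ct * (((n : ℝ) * t) / a ^ 2) ^ (t / 2)) := by
  classical
  obtain ⟨th, htth⟩ := hte
  have htpos : 0 < t := by omega
  have htR : (0:ℝ) < (t:ℝ) := by exact_mod_cast htpos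
  refine ⟨(t.factorial : ℝ) * Real.exp (2*(t:ℝ)/3) / (t:ℝ)^t, ?_, ?_⟩
  · intro ht6
    have h := BR_fact t ht6
    have htp : (0:ℝ) < (t:ℝ)^t := pow_pos htR t
    rw [div_lt_one htp]
    exact h
  · intro n Ω mΩ μ hμ X hXm hX01 hind a ha
    rcases Nat.eq_zero_or_pos n with hn0 | hn
    · subst hn0
      have hempty : {ω | a ≤ |(∑ i, X i ω) - ∫ ω', (∑ i, X i ω') ∂μ|} = (∅ : Set Ω) := by
        ext ω
        simp only [Set.mem_setOf_eq, Set.mem_empty_iff_false, iff_false, not_le]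
        simpa using ha
      rw [hempty]
      simp
    have hth2 : t / 2 = th := by omega
    have hXint : ∀ i, Integrable (X i) μ := fun i =>
      BR_integrable (hXm i) (C := 1) (fun ω =>
        abs_le.2 ⟨by linarith [(hX01 i ω).1], (hX01 i ω).2⟩)
    set m : Fin n → ℝ := fun i => ∫ ω, X i ω ∂μ with hm
    have hm0 : ∀ i, 0 ≤ m i := fun i => integral_nonneg fun ω => (hX01 i ω).1
    have hm1 : ∀ i, m i ≤ 1 := by
      intro i
      calc m i = ∫ ω, X i ω ∂μ := rfl
        _ ≤ ∫ ω, (1:ℝ) ∂μ :=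
            integral_mono (hXint i) (integrable_const 1) fun ω => (hX01 i ω).2
        _ = 1 := by simp
    have hYb : ∀ i ω, |X i ω - m i| ≤ 1 := by
      intro i ω
      rw [abs_le]
      constructor
      · linarith [(hX01 i ω).1, hm1 i]
      · linarith [(hX01 i ω).2, hm0 i]
    have hYm : ∀ i, Measurable (fun ω => X i ω - m i) := fun i =>
      (hXm i).sub measurable_const
    have hEY : ∀ i, ∫ ω, (X i ω - m i) ∂μ = 0 := by
      intro i
      rw [integral_sub (hXint i) (integrable_const _), integral_const]
      simp [hm]
    have hmom := BR_moment hn ht4 (fun i ω => X i ω - m i) hYm hYb hEY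
      (fun k hk => BR_factor X hXm m hYb hind k hk) th htth
    have hsum : ∫ ω', (∑ i, X i ω') ∂μ = ∑ i, m i := by
      rw [integral_finset_sum _ (fun i _ => hXint i)]
    have hset : ∀ ω, (∑ i, X i ω) - ∫ ω', (∑ i, X i ω') ∂μ = ∑ i, (X i ω - m i) := by
      intro ω
      rw [hsum, ← Finset.sum_sub_distrib]
    have hSm : Measurable (fun ω => ∑ i, (X i ω - m i)) :=
      Finset.measurable_sum _ (fun i _ => hYm i)
    have hSb : ∀ ω, |∑ i, (X i ω - m i)| ≤ (n:ℝ) := by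
      intro ω
      calc |∑ i, (X i ω - m i)| ≤ ∑ i, |X i ω - m i| := Finset.abs_sum_le_sum_abs _ _
        _ ≤ ∑ _i : Fin n, (1:ℝ) := Finset.sum_le_sum fun i _ => hYb i ω
        _ = n := by simp
    have hgint : Integrable (fun ω => (∑ i, (X i ω - m i)) ^ t) μ :=
      BR_integrable (hSm.pow_const t) (C := (n:ℝ)^t) (fun ω => by
        rw [abs_pow]
        exact pow_le_pow_left₀ (abs_nonneg _) (hSb ω) t)
    have hgoalset : {ω | a ≤ |(∑ i, X i ω) - ∫ ω', (∑ i, X i ω') ∂μ|}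
        = {ω | a ≤ |∑ i, (X i ω - m i)|} := by
      ext ω
      simp only [Set.mem_setOf_eq, hset ω]
    have hAmeas : MeasurableSet {ω | a ≤ |∑ i, (X i ω - m i)|} := by
      have : {ω | a ≤ |∑ i, (X i ω - m i)|}
          = (fun ω => |∑ i, (X i ω - m i)|) ⁻¹' (Set.Ici a) := rfl
      rw [this]
      exact hSm.abs measurableSet_Ici
    have hte' : Even t := ⟨th, htth⟩
    have hmarkov : a^t * (μ {ω | a ≤ |∑ i, (X i ω - m i)|}).toReal
        ≤ ∫ ω, (∑ i, (X i ω - m i)) ^ t ∂μ := by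
      calc a^t * (μ {ω | a ≤ |∑ i, (X i ω - m i)|}).toReal
          ≤ ∫ ω in {ω | a ≤ |∑ i, (X i ω - m i)|}, (∑ i, (X i ω - m i)) ^ t ∂μ := by
            rw [mul_comm, ← smul_eq_mul, ← measureReal_def]
            apply setIntegral_ge_of_const_le hAmeas (measure_ne_top μ _)
            · intro ω hω
              have hω' : a ≤ |∑ i, (X i ω - m i)| := hω
              calc a^t ≤ |∑ i, (X i ω - m i)|^t := pow_le_pow_left₀ ha.le hω' t
                _ = (∑ i, (X i ω - m i)) ^ t := hte'.pow_abs _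
            · exact hgint.integrableOn
        _ ≤ ∫ ω, (∑ i, (X i ω - m i)) ^ t ∂μ :=
            setIntegral_le_integral hgint (ae_of_all _ fun ω => hte'.pow_nonneg _)
    have hat : (0:ℝ) < a^t := pow_pos ha t
    have hnR : (0:ℝ) < (n:ℝ) := by exact_mod_cast hn
    have hfinal : (μ {ω | a ≤ |∑ i, (X i ω - m i)|}).toReal
        ≤ ((t.factorial : ℝ) * Real.exp (2*(t:ℝ)/3) / (t:ℝ)^t) * (((n:ℝ)*t)/a^2)^(t/2) := by
      rw [hth2]
      have h1 : (μ {ω | a ≤ |∑ i, (X i ω - m i)|}).toReal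
          ≤ (∫ ω, (∑ i, (X i ω - m i)) ^ t ∂μ) / a^t := by
        rw [le_div_iff₀ hat]
        linarith [hmarkov]
      have heq : (t.factorial:ℝ) * Real.exp (2*(t:ℝ)/3) * ((n:ℝ)/(t:ℝ))^th / a^t
          = ((t.factorial:ℝ) * Real.exp (2*(t:ℝ)/3) / (t:ℝ)^t) * (((n:ℝ)*t)/a^2)^th := by
        have htt : ((t:ℝ))^t = (t:ℝ)^th * (t:ℝ)^th := by
          rw [show t = th + th from htth, pow_add]
        have hat2 : ((a^2:ℝ))^th = a^t := by
          rw [← pow_mul]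
          congr 1
          omega
        rw [div_pow, div_pow, hat2, htt]
        rw [mul_pow]
        field_simp
      calc (μ {ω | a ≤ |∑ i, (X i ω - m i)|}).toReal
          ≤ (∫ ω, (∑ i, (X i ω - m i)) ^ t ∂μ) / a^t := h1
        _ ≤ ((t.factorial:ℝ) * Real.exp (2*(t:ℝ)/3) * ((n:ℝ)/(t:ℝ))^th) / a^t := by
            gcongr
        _ = _ := heq
    rw [hgoalset]
    calc μ {ω | a ≤ |∑ i, (X i ω - m i)|}
        = ENNReal.ofReal ((μ {ω | a ≤ |∑ i, (X i ω - m i)|}).toReal) :=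
          (ENNReal.ofReal_toReal (measure_ne_top μ _)).symm
      _ ≤ ENNReal.ofReal (((t.factorial : ℝ) * Real.exp (2*(t:ℝ)/3) / (t:ℝ)^t)
            * (((n:ℝ)*t)/a^2)^(t/2)) := ENNReal.ofReal_le_ofReal hfinal
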